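/- Let A = (a_{ij}) be an m×n (0,1)-matrix and let N_A denote the number of entries of A equal to 1. Let k be a positive integer with k ≤ min(m,n). If (mn/k²)·(N_A·e²/(mn))^k < 1, then there exist a permutation π₁ of [m] and a permutation π₂ of [n] such that for every (s,t) ∈ [⌊m/k⌋]×[⌊n/k⌋], the block B_{st}(π₁,π₂) contains at least one zero entry. -/

import Mathlib

open Finset


lemma perm_prescribed_card_le {m k : ℕ} (a b : Fin k → Fin m)
    (ha : Function.Injective a) (hb : Function.Injective b) :
    (Finset.univ.filter fun π : Equiv.Perm (Fin m) => ∀ l, π (a l) = b l).card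
      ≤ (m - k).factorial := by
  classical
  set Af : Finset (Fin m) := Finset.univ.image a with hAf
  set Bf : Finset (Fin m) := Finset.univ.image b with hBf
  have hcardA : Fintype.card ↥(Afᶜ : Finset (Fin m)) = m - k := by
    rw [Fintype.card_coe, Finset.card_compl, Finset.card_image_of_injective _ ha,
      Finset.card_univ, Fintype.card_fin, Fintype.card_fin]
  have hcardB : Fintype.card ↥(Bfᶜ : Finset (Fin m)) = m - k := by
    rw [Fintype.card_coe, Finset.card_compl, Finset.card_image_of_injective _ hb,
      Finset.card_univ, Fintype.card_fin, Fintype.card_fin]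
  have e0 : (↥(Afᶜ : Finset (Fin m)) ≃ ↥(Bfᶜ : Finset (Fin m))) :=
    Fintype.equivOfCardEq (by rw [hcardA, hcardB])
  set G : Equiv.Perm (Fin m) → (↥(Afᶜ : Finset (Fin m)) ↪ ↥(Bfᶜ : Finset (Fin m))) :=
    fun π => if h : (∀ l, π (a l) = b l) then
      ⟨fun x => ⟨π x.1, by
        rcases x with ⟨x, hx⟩
        simp only [Finset.mem_compl] at hx ⊢
        intro hmem
        rw [hBf, Finset.mem_image] at hmem
        obtain ⟨l, -, hl⟩ := hmem
        apply hx
        have : π (a l) = π x := by rw [h l, hl]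
        have := π.injective this
        rw [hAf, Finset.mem_image]
        exact ⟨l, Finset.mem_univ l, this⟩⟩,
       fun x y hxy => by
        apply Subtype.ext
        exact π.injective (congrArg Subtype.val hxy)⟩
    else e0.toEmbedding with hG
  have hinj : Set.InjOn G
      (Finset.univ.filter fun π : Equiv.Perm (Fin m) => ∀ l, π (a l) = b l) := by
    intro π hπ π' hπ' hgg
    simp only [Finset.coe_filter, Set.mem_setOf_eq] at hπ hπ'
    have hd : ∀ l, π (a l) = b l := hπ.2
    have hd' : ∀ l, π' (a l) = b l := hπ'.2
    rw [hG] at hgg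
    simp only [dif_pos hd, dif_pos hd'] at hgg
    apply Equiv.ext
    intro y
    by_cases hy : y ∈ Af
    · rw [hAf, Finset.mem_image] at hy
      obtain ⟨l, -, rfl⟩ := hy
      rw [hd l, hd' l]
    · have hyc : y ∈ (Afᶜ : Finset (Fin m)) := Finset.mem_compl.2 hy
      have := congrFun (congrArg (fun (f : _ ↪ _) => (f : _ → _)) hgg) ⟨y, hyc⟩
      exact congrArg Subtype.val this
  calc (Finset.univ.filter fun π : Equiv.Perm (Fin m) => ∀ l, π (a l) = b l).card
      ≤ (Finset.univ : Finset (↥(Afᶜ : Finset (Fin m)) ↪ ↥(Bfᶜ : Finset (Fin m)))).card :=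
        Finset.card_le_card_of_injOn G (fun _ _ => Finset.mem_univ _) hinj
    _ = (m - k).factorial := by
        rw [Finset.card_univ, Fintype.card_embedding_eq, hcardA, hcardB,
          Nat.descFactorial_self]


lemma descFactorial_eq_prod_range' (m : ℕ) : ∀ k : ℕ,
    m.descFactorial k = ∏ i ∈ Finset.range k, (m - i)
  | 0 => by simp
  | (k+1) => by
      rw [Nat.descFactorial_succ, Finset.prod_range_succ,
        descFactorial_eq_prod_range' m k, mul_comm]

lemma pow_mul_factorial_le (m k : ℕ) (hkm : k ≤ m) :
    m ^ k * k.factorial ≤ k ^ k * m.descFactorial k := by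
  rw [← Nat.descFactorial_self k, descFactorial_eq_prod_range' m,
    descFactorial_eq_prod_range' k,
    show m ^ k = ∏ _i ∈ Finset.range k, m by simp,
    show k ^ k = ∏ _i ∈ Finset.range k, k by simp,
    ← Finset.prod_mul_distrib, ← Finset.prod_mul_distrib]
  apply Finset.prod_le_prod'
  intro i hi
  rw [Finset.mem_range] at hi
  have h1 : m * (k - i) = m * k - m * i := by rw [Nat.mul_sub]
  have h2 : k * (m - i) = k * m - k * i := by rw [Nat.mul_sub]
  rw [h1, h2, mul_comm k m]
  exact Nat.sub_le_sub_left (Nat.mul_le_mul_right i hkm) (m * k)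

lemma pow_le_exp_pow_mul_descFactorial (m k : ℕ) (hkm : k ≤ m) :
    (m : ℝ) ^ k ≤ Real.exp 1 ^ k * (m.descFactorial k : ℝ) := by
  have hk : (k : ℝ) ^ k ≤ Real.exp 1 ^ k * (k.factorial : ℝ) := by
    have h1 : (k : ℝ) ^ k / (k.factorial : ℝ) ≤ Real.exp k := by
      calc (k : ℝ) ^ k / (k.factorial : ℝ)
          ≤ ∑ i ∈ Finset.range (k + 1), (k : ℝ) ^ i / i.factorial := by
            exact Finset.single_le_sum (f := fun i => (k : ℝ) ^ i / (i.factorial : ℝ))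
              (fun i _ => by positivity) (Finset.self_mem_range_succ k)
        _ ≤ Real.exp k := Real.sum_le_exp_of_nonneg (Nat.cast_nonneg k) (k + 1)
    rw [Real.exp_one_pow]
    rw [div_le_iff₀ (by positivity)] at h1
    calc (k : ℝ) ^ k ≤ Real.exp k * (k.factorial : ℝ) := h1
      _ = Real.exp k * (k.factorial : ℝ) := rfl
  have hnat := pow_mul_factorial_le m k hkm
  have hreal : (m : ℝ) ^ k * (k.factorial : ℝ) ≤ (k : ℝ) ^ k * (m.descFactorial k : ℝ) := by
    exact_mod_cast hnat
  have hfpos : (0 : ℝ) < (k.factorial : ℝ) := by positivity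
  rw [← mul_le_mul_iff_of_pos_right hfpos]
  calc (m : ℝ) ^ k * (k.factorial : ℝ)
      ≤ (k : ℝ) ^ k * (m.descFactorial k : ℝ) := hreal
    _ ≤ (Real.exp 1 ^ k * (k.factorial : ℝ)) * (m.descFactorial k : ℝ) := by
        apply mul_le_mul_of_nonneg_right hk (by positivity)
    _ = Real.exp 1 ^ k * (m.descFactorial k : ℝ) * (k.factorial : ℝ) := by ring

lemma bad_block_card_le {m n k : ℕ} (hk : 0 < k) (A : Fin m → Fin n → Bool)
    {s t : ℕ} (hs : s < m / k) (ht : t < n / k) :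
    (Finset.univ.filter fun p : Equiv.Perm (Fin m) × Equiv.Perm (Fin n) =>
        ∀ (i : Fin m) (j : Fin n), s * k ≤ i.1 → i.1 < (s + 1) * k →
          t * k ≤ j.1 → j.1 < (t + 1) * k → A (p.1 i) (p.2 j) = true).card
      ≤ ((Finset.univ.filter fun c : Fin m × Fin n => A c.1 c.2 = true).card ^ k)
        * ((m - k).factorial * (n - k).factorial) := by
  classical
  have hrow : ∀ l : Fin k, s * k + l.1 < m := by
    intro l
    have h1 : s * k + l.1 < (s + 1) * k := by
      have := l.2; rw [Nat.succ_mul]; omega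
    have h2 : (s + 1) * k ≤ m :=
      le_trans (Nat.mul_le_mul_right k hs) (Nat.div_mul_le_self m k)
    omega
  have hcol : ∀ l : Fin k, t * k + l.1 < n := by
    intro l
    have h1 : t * k + l.1 < (t + 1) * k := by
      have := l.2; rw [Nat.succ_mul]; omega
    have h2 : (t + 1) * k ≤ n :=
      le_trans (Nat.mul_le_mul_right k ht) (Nat.div_mul_le_self n k)
    omega
  set ri : Fin k → Fin m := fun l => ⟨s * k + l.1, hrow l⟩ with hri
  set ci : Fin k → Fin n := fun l => ⟨t * k + l.1, hcol l⟩ with hci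
  have hriinj : Function.Injective ri := by
    intro l l' h
    have := congrArg Fin.val h
    simp only [hri] at this
    exact Fin.ext (by omega)
  have hciinj : Function.Injective ci := by
    intro l l' h
    have := congrArg Fin.val h
    simp only [hci] at this
    exact Fin.ext (by omega)
  set F : (Equiv.Perm (Fin m) × Equiv.Perm (Fin n)) → (Fin k → Fin m × Fin n) :=
    fun p l => (p.1 (ri l), p.2 (ci l)) with hF
  set T : Finset (Fin k → Fin m × Fin n) :=
    Fintype.piFinset (fun _ : Fin k =>
      Finset.univ.filter fun c : Fin m × Fin n => A c.1 c.2 = true) with hT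
  set Bad : Finset (Equiv.Perm (Fin m) × Equiv.Perm (Fin n)) :=
    Finset.univ.filter fun p =>
      ∀ (i : Fin m) (j : Fin n), s * k ≤ i.1 → i.1 < (s + 1) * k →
        t * k ≤ j.1 → j.1 < (t + 1) * k → A (p.1 i) (p.2 j) = true with hBad
  have hmaps : ∀ p ∈ Bad, F p ∈ T := by
    intro p hp
    rw [hBad, Finset.mem_filter] at hp
    rw [hT, Fintype.mem_piFinset]
    intro l
    rw [Finset.mem_filter]
    refine ⟨Finset.mem_univ _, ?_⟩
    apply hp.2 (ri l) (ci l)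
    · exact Nat.le_add_right _ _
    · have := l.2; rw [Nat.succ_mul]; simpa [hri] using by omega
    · exact Nat.le_add_right _ _
    · have := l.2; rw [Nat.succ_mul]; simpa [hci] using by omega
  have hfiber : ∀ f ∈ T,
      (Bad.filter fun p => F p = f).card ≤ (m - k).factorial * (n - k).factorial := by
    intro f hf
    by_cases hne : (Bad.filter fun p => F p = f).Nonempty
    · obtain ⟨p₀, hp₀⟩ := hne
      rw [Finset.mem_filter] at hp₀
      have hfr : ∀ l, (f l).1 = p₀.1 (ri l) := by
        intro l; rw [← hp₀.2]
      have hfc : ∀ l, (f l).2 = p₀.2 (ci l) := by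
        intro l; rw [← hp₀.2]
      have hbinj : Function.Injective (fun l => (f l).1) := by
        intro l l' h
        simp only [hfr] at h
        exact hriinj (p₀.1.injective h)
      have hbinj' : Function.Injective (fun l => (f l).2) := by
        intro l l' h
        simp only [hfc] at h
        exact hciinj (p₀.2.injective h)
      have hsub : (Bad.filter fun p => F p = f) ⊆
          (Finset.univ.filter fun π : Equiv.Perm (Fin m) => ∀ l, π (ri l) = (f l).1) ×ˢ
          (Finset.univ.filter fun π : Equiv.Perm (Fin n) => ∀ l, π (ci l) = (f l).2) := by
        intro p hp
        rw [Finset.mem_filter] at hp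
        rw [Finset.mem_product, Finset.mem_filter, Finset.mem_filter]
        have h1 : ∀ l, p.1 (ri l) = (f l).1 := by
          intro l; rw [← hp.2]
        have h2 : ∀ l, p.2 (ci l) = (f l).2 := by
          intro l; rw [← hp.2]
        exact ⟨⟨Finset.mem_univ _, h1⟩, ⟨Finset.mem_univ _, h2⟩⟩
      calc (Bad.filter fun p => F p = f).card
          ≤ _ := Finset.card_le_card hsub
        _ = _ * _ := Finset.card_product _ _
        _ ≤ (m - k).factorial * (n - k).factorial :=
            Nat.mul_le_mul (perm_prescribed_card_le ri _ hriinj hbinj)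
              (perm_prescribed_card_le ci _ hciinj hbinj')
    · rw [Finset.not_nonempty_iff_eq_empty] at hne
      rw [hne, Finset.card_empty]
      exact Nat.zero_le _
  have hTcard : T.card =
      (Finset.univ.filter fun c : Fin m × Fin n => A c.1 c.2 = true).card ^ k := by
    rw [hT, Fintype.card_piFinset]
    simp
  calc Bad.card ≤ ((m - k).factorial * (n - k).factorial) * T.card :=
        Finset.card_le_mul_card_image_of_maps_to hmaps _ hfiber
    _ = _ := by rw [hTcard]; ring

/-- **Existence of good permutations** (Lemma 2 of the paper).
`A : Fin m → Fin n → Bool` is a (0,1)-matrix (1 ↔ `true`); blocks are indexed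
with `s < m / k`, `t < n / k` (0-indexed), block `(s,t)` consisting of rows
`s*k, …, s*k + k - 1` and columns `t*k, …, t*k + k - 1` of the permuted matrix. -/
theorem matrix_good_permutations (m n k : ℕ) (hk : 0 < k) (hkm : k ≤ m) (hkn : k ≤ n)
    (A : Fin m → Fin n → Bool)
    (hlt : ((m * n : ℝ) / (k : ℝ) ^ 2) *
        (((Nat.card {p : Fin m × Fin n // A p.1 p.2 = true} : ℝ) * Real.exp 1 ^ 2) /
          (m * n)) ^ k < 1) :
    ∃ (π₁ : Equiv.Perm (Fin m)) (π₂ : Equiv.Perm (Fin n)),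
      ∀ s t : ℕ, s < m / k → t < n / k →
        ∃ (i : Fin m) (j : Fin n),
          s * k ≤ i.val ∧ i.val < (s + 1) * k ∧
          t * k ≤ j.val ∧ j.val < (t + 1) * k ∧
          A (π₁ i) (π₂ j) = false := by
  classical
  by_contra hcon
  push_neg at hcon
  set N : ℕ := (Finset.univ.filter fun c : Fin m × Fin n => A c.1 c.2 = true).card with hN
  have hNcard : (Nat.card {p : Fin m × Fin n // A p.1 p.2 = true} : ℕ) = N := by
    rw [Nat.card_eq_fintype_card, Fintype.card_subtype]
  rw [hNcard] at hlt
  set Bad : ℕ → ℕ → Finset (Equiv.Perm (Fin m) × Equiv.Perm (Fin n)) := fun s t =>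
    Finset.univ.filter fun p =>
      ∀ (i : Fin m) (j : Fin n), s * k ≤ i.1 → i.1 < (s + 1) * k →
        t * k ≤ j.1 → j.1 < (t + 1) * k → A (p.1 i) (p.2 j) = true with hBadDef
  have hcover : (Finset.univ : Finset (Equiv.Perm (Fin m) × Equiv.Perm (Fin n))) ⊆
      (Finset.range (m / k) ×ˢ Finset.range (n / k)).biUnion fun st => Bad st.1 st.2 := by
    intro p _
    obtain ⟨s, t, hs, ht, hall⟩ := hcon p.1 p.2
    rw [Finset.mem_biUnion]
    refine ⟨(s, t), by simp [Finset.mem_product, hs, ht], ?_⟩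
    rw [hBadDef]
    simp only [Finset.mem_filter, Finset.mem_univ, true_and]
    intro i j h1 h2 h3 h4
    exact Bool.ne_false_iff.mp (hall i j h1 h2 h3 h4)
  -- counting
  have hcount : m.factorial * n.factorial ≤
      (m / k) * (n / k) * (N ^ k * ((m - k).factorial * (n - k).factorial)) := by
    have h0 : Fintype.card (Equiv.Perm (Fin m) × Equiv.Perm (Fin n)) =
        m.factorial * n.factorial := by
      simp [Fintype.card_perm]
    calc m.factorial * n.factorial
        = (Finset.univ : Finset (Equiv.Perm (Fin m) × Equiv.Perm (Fin n))).card := by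
          rw [Finset.card_univ, h0]
      _ ≤ ((Finset.range (m / k) ×ˢ Finset.range (n / k)).biUnion
            fun st => Bad st.1 st.2).card := Finset.card_le_card hcover
      _ ≤ ∑ st ∈ Finset.range (m / k) ×ˢ Finset.range (n / k), (Bad st.1 st.2).card :=
          Finset.card_biUnion_le
      _ ≤ (Finset.range (m / k) ×ˢ Finset.range (n / k)).card •
            (N ^ k * ((m - k).factorial * (n - k).factorial)) := by
          apply Finset.sum_le_card_nsmul
          intro st hst
          rw [Finset.mem_product, Finset.mem_range, Finset.mem_range] at hst
          exact bad_block_card_le hk A hst.1 hst.2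
      _ = (m / k) * (n / k) * (N ^ k * ((m - k).factorial * (n - k).factorial)) := by
          rw [Finset.card_product, Finset.card_range, Finset.card_range, smul_eq_mul]
  -- real arithmetic to contradict
  have hkR : (0 : ℝ) < (k : ℝ) := by exact_mod_cast hk
  have hmR : (0 : ℝ) < (m : ℝ) := by exact_mod_cast lt_of_lt_of_le hk hkm
  have hnR : (0 : ℝ) < (n : ℝ) := by exact_mod_cast lt_of_lt_of_le hk hkn
  have hmn : (0 : ℝ) < (m : ℝ) * (n : ℝ) := mul_pos hmR hnR
  have e2pos : (0 : ℝ) < Real.exp 1 ^ 2 := by positivity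
  -- step 1: multiply hlt by (m*n)^k
  have h1 : ((m : ℝ) * n / (k : ℝ) ^ 2) * ((N : ℝ) ^ k * (Real.exp 1 ^ 2) ^ k)
      < ((m : ℝ) * n) ^ k := by
    have := mul_lt_mul_of_pos_right hlt (pow_pos hmn k)
    rw [one_mul] at this
    calc ((m : ℝ) * n / (k : ℝ) ^ 2) * ((N : ℝ) ^ k * (Real.exp 1 ^ 2) ^ k)
        = ((m : ℝ) * n / (k : ℝ) ^ 2) *
            (((N : ℝ) * Real.exp 1 ^ 2 / ((m : ℝ) * n)) ^ k) * ((m : ℝ) * n) ^ k := by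
          rw [div_pow, mul_pow]
          field_simp
      _ < ((m : ℝ) * n) ^ k := this
  -- step 2: floor divisions
  have h2 : ((m / k : ℕ) : ℝ) * ((n / k : ℕ) : ℝ) ≤ (m : ℝ) * n / (k : ℝ) ^ 2 := by
    have ha : ((m / k : ℕ) : ℝ) ≤ (m : ℝ) / k := Nat.cast_div_le
    have hb : ((n / k : ℕ) : ℝ) ≤ (n : ℝ) / k := Nat.cast_div_le
    calc ((m / k : ℕ) : ℝ) * ((n / k : ℕ) : ℝ)
        ≤ ((m : ℝ) / k) * ((n : ℝ) / k) :=
          mul_le_mul ha hb (Nat.cast_nonneg _) (by positivity)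
      _ = (m : ℝ) * n / (k : ℝ) ^ 2 := by field_simp
  have h3 : ((m / k : ℕ) : ℝ) * ((n / k : ℕ) : ℝ) * ((N : ℝ) ^ k * (Real.exp 1 ^ 2) ^ k)
      < ((m : ℝ) * n) ^ k :=
    lt_of_le_of_lt (mul_le_mul_of_nonneg_right h2 (by positivity)) h1
  -- step 3: (mn)^k ≤ (e^2)^k * dF m k * dF n k
  have h4 : ((m : ℝ) * n) ^ k ≤
      (Real.exp 1 ^ 2) ^ k * ((m.descFactorial k : ℝ) * (n.descFactorial k : ℝ)) := by
    have hm' := pow_le_exp_pow_mul_descFactorial m k hkm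
    have hn' := pow_le_exp_pow_mul_descFactorial n k hkn
    calc ((m : ℝ) * n) ^ k = (m : ℝ) ^ k * (n : ℝ) ^ k := mul_pow _ _ _
      _ ≤ (Real.exp 1 ^ k * (m.descFactorial k : ℝ)) *
            (Real.exp 1 ^ k * (n.descFactorial k : ℝ)) :=
          mul_le_mul hm' hn' (by positivity) (by positivity)
      _ = (Real.exp 1 ^ 2) ^ k * ((m.descFactorial k : ℝ) * (n.descFactorial k : ℝ)) := by
          rw [← pow_mul]; ring
  -- step 4: cancel (e^2)^k
  have h5 : ((m / k : ℕ) : ℝ) * ((n / k : ℕ) : ℝ) * (N : ℝ) ^ k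
      < (m.descFactorial k : ℝ) * (n.descFactorial k : ℝ) := by
    have := lt_of_lt_of_le h3 h4
    have hpos : (0 : ℝ) < (Real.exp 1 ^ 2) ^ k := by positivity
    rw [show ((m / k : ℕ) : ℝ) * ((n / k : ℕ) : ℝ) * ((N : ℝ) ^ k * (Real.exp 1 ^ 2) ^ k)
        = (((m / k : ℕ) : ℝ) * ((n / k : ℕ) : ℝ) * (N : ℝ) ^ k) * (Real.exp 1 ^ 2) ^ k
        from by ring,
      show (Real.exp 1 ^ 2) ^ k * ((m.descFactorial k : ℝ) * (n.descFactorial k : ℝ))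
        = ((m.descFactorial k : ℝ) * (n.descFactorial k : ℝ)) * (Real.exp 1 ^ 2) ^ k
        from by ring] at this
    exact lt_of_mul_lt_mul_right this (le_of_lt hpos)
  have h6 : (m / k) * (n / k) * N ^ k < m.descFactorial k * n.descFactorial k := by
    exact_mod_cast h5
  -- conclude
  have h7 : (m / k) * (n / k) * (N ^ k * ((m - k).factorial * (n - k).factorial))
      < m.factorial * n.factorial := by
    have hfp : 0 < (m - k).factorial * (n - k).factorial :=
      Nat.mul_pos (Nat.factorial_pos _) (Nat.factorial_pos _)
    calc (m / k) * (n / k) * (N ^ k * ((m - k).factorial * (n - k).factorial))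
        = ((m / k) * (n / k) * N ^ k) * ((m - k).factorial * (n - k).factorial) := by ring
      _ < (m.descFactorial k * n.descFactorial k) *
            ((m - k).factorial * (n - k).factorial) :=
          (Nat.mul_lt_mul_right hfp).mpr h6
      _ = ((m - k).factorial * m.descFactorial k) * ((n - k).factorial * n.descFactorial k) :=
          by ring
      _ = m.factorial * n.factorial := by
          rw [Nat.factorial_mul_descFactorial hkm, Nat.factorial_mul_descFactorial hkn]
  exact absurd hcount (Nat.not_le.mpr h7)
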